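/- With the notation of the quotient construction (A = B/R, axiom set (I, C) on A, induced axiom set (I^R, C^R) on B), the maps W ↦ es(W) = {b | [b] ∈ W} and V ↦ es⁻(V) = {z ∈ B/R | ∃ b ∈ V, z = [b]} form an order isomorphism between the complete lattices of fixpoints of ◁_{I,C} on B/R and of ◁^R on B. -/
import Mathlib


inductive Cover {A : Type*} (I : A → Type*) (C : ∀ a, I a → Set A) (V : Set A) : A → Prop
  | rf {a : A} : a ∈ V → Cover I C V a
  | tr {a : A} (i : I a) : (∀ y ∈ C a i, Cover I C V y) → Cover I C V a

section Aux
universe u v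
variable {B : Type u} (sR : Setoid B)
    (I : Quotient sR → Type v) (C : ∀ a, I a → Set (Quotient sR))
    (IR : B → Type (max u v)) (hIR : ∀ b, IR b = (I ⟦b⟧ ⊕ {y : B // sR.r b y}))
    (CR : ∀ b, IR b → Set B)
    (hCR : ∀ b j, CR b j =
      Sum.elim (fun j : I ⟦b⟧ => {x : B | (⟦x⟧ : Quotient sR) ∈ C ⟦b⟧ j})
               (fun y : {y : B // sR.r b y} => {y.1}) (cast (hIR b) j))

include hIR hCR

lemma covA (W : Set (Quotient sR)) (b : B)
    (h : Cover IR CR {x | (⟦x⟧ : Quotient sR) ∈ W} b) : Cover I C W ⟦b⟧ := by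
  induction h with
  | rf h => exact .rf h
  | @tr b i hi ih =>
    rcases hc : cast (hIR b) i with j | y
    · refine .tr j fun z hz => ?_
      obtain ⟨y, rfl⟩ := Quotient.exists_rep z
      exact ih y (by rw [hCR, hc]; exact hz)
    · have h1 : Cover I C W ⟦y.1⟧ := ih y.1 (by rw [hCR, hc]; exact rfl)
      have h2 : (⟦y.1⟧ : Quotient sR) = ⟦b⟧ := Quotient.sound (sR.symm y.2)
      rwa [h2] at h1

lemma covB (W : Set (Quotient sR)) (z : Quotient sR) (h : Cover I C W z) :
    ∀ b : B, (⟦b⟧ : Quotient sR) = z →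
      Cover IR CR {x | (⟦x⟧ : Quotient sR) ∈ W} b := by
  induction h with
  | rf h => exact fun b hb => .rf (show (⟦b⟧ : Quotient sR) ∈ W from hb ▸ h)
  | @tr a i hi ih =>
    intro b hb
    subst hb
    refine .tr (cast (hIR b).symm (Sum.inl i)) fun x hx => ?_
    have hc : cast (hIR b) (cast (hIR b).symm (Sum.inl i)) = Sum.inl i := by simp
    rw [hCR, hc] at hx
    exact ih ⟦x⟧ hx x rfl

lemma satAux (V : Set B) (hV : {x | Cover IR CR V x} = V)
    (b : B) (hb : b ∈ V) (b' : B) (hr : sR.r b b') : b' ∈ V := by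
  have hcov : Cover IR CR V b' := by
    refine .tr (cast (hIR b').symm (Sum.inr ⟨b, sR.symm hr⟩)) fun x hx => ?_
    have hc : cast (hIR b') (cast (hIR b').symm
        (Sum.inr (⟨b, sR.symm hr⟩ : {y // sR.r b' y}))) = Sum.inr ⟨b, sR.symm hr⟩ := by simp
    rw [hCR, hc] at hx
    exact .rf (by rwa [show x = b from hx])
  exact hV ▸ hcov

end Aux

theorem stmt7.{u, v} {B : Type u} (sR : Setoid B)
    (I : Quotient sR → Type v) (C : ∀ a, I a → Set (Quotient sR))
    (IR : B → Type (max u v)) (hIR : ∀ b, IR b = (I ⟦b⟧ ⊕ {y : B // sR.r b y}))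
    (CR : ∀ b, IR b → Set B)
    (hCR : ∀ b j, CR b j =
      Sum.elim (fun j : I ⟦b⟧ => {x : B | (⟦x⟧ : Quotient sR) ∈ C ⟦b⟧ j})
               (fun y : {y : B // sR.r b y} => {y.1}) (cast (hIR b) j)) :
    ∃ e : {W : Set (Quotient sR) // {z | Cover I C W z} = W} ≃o
          {V : Set B // {x | Cover IR CR V x} = V},
      (∀ W, (e W).1 = {b : B | (⟦b⟧ : Quotient sR) ∈ W.1}) ∧
      (∀ V, ((e.symm V).1 = {z : Quotient sR | ∃ b ∈ V.1, z = ⟦b⟧})) := by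
  -- es of a fixpoint is a fixpoint
  have hA : ∀ W : Set (Quotient sR), {z | Cover I C W z} = W →
      {x | Cover IR CR {b : B | (⟦b⟧ : Quotient sR) ∈ W} x}
        = {b : B | (⟦b⟧ : Quotient sR) ∈ W} := by
    intro W hW
    ext b
    constructor
    · intro h
      exact (show (⟦b⟧ : Quotient sR) ∈ W from hW ▸ covA sR I C IR hIR CR hCR W b h)
    · exact .rf
  -- es ∘ es⁻ = id on fixpoints
  have hgf : ∀ V : Set B, {x | Cover IR CR V x} = V →
      {b : B | (⟦b⟧ : Quotient sR) ∈ {z : Quotient sR | ∃ b' ∈ V, z = ⟦b'⟧}} = V := by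
    intro V hV
    ext b
    constructor
    · rintro ⟨b', hb', heq⟩
      exact satAux sR I C IR hIR CR hCR V hV b' hb' b (sR.symm (Quotient.exact heq))
    · intro hb
      exact ⟨b, hb, rfl⟩
  -- es⁻ of a fixpoint is a fixpoint
  have hB : ∀ V : Set B, {x | Cover IR CR V x} = V →
      {z | Cover I C {z : Quotient sR | ∃ b ∈ V, z = ⟦b⟧} z}
        = {z : Quotient sR | ∃ b ∈ V, z = ⟦b⟧} := by
    intro V hV
    ext z
    constructor
    · intro h
      obtain ⟨b, rfl⟩ := Quotient.exists_rep z
      have h1 := covB sR I C IR hIR CR hCR _ _ h b rfl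
      rw [hgf V hV] at h1
      exact ⟨b, hV ▸ h1, rfl⟩
    · exact .rf
  refine ⟨{ toFun := fun W => ⟨{b : B | (⟦b⟧ : Quotient sR) ∈ W.1}, hA W.1 W.2⟩,
            invFun := fun V => ⟨{z : Quotient sR | ∃ b ∈ V.1, z = ⟦b⟧}, hB V.1 V.2⟩,
            left_inv := ?_, right_inv := ?_, map_rel_iff' := ?_ }, fun W => rfl, fun V => rfl⟩
  · intro W
    refine Subtype.ext ?_
    ext z
    constructor
    · rintro ⟨b, hb, rfl⟩
      exact hb
    · intro hz
      obtain ⟨b, rfl⟩ := Quotient.exists_rep z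
      exact ⟨b, hz, rfl⟩
  · intro V
    exact Subtype.ext (hgf V.1 V.2)
  · intro W W'
    constructor
    · intro hsub z hz
      obtain ⟨b, rfl⟩ := Quotient.exists_rep z
      exact hsub (show b ∈ {b : B | (⟦b⟧ : Quotient sR) ∈ W.1} from hz)
    · intro hsub b hb
      exact hsub hb
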